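/- Let S be an n×n real matrix with ‖I−S‖_op < 1, let m ∈ ℝⁿ, σ > 0, and let ε be an ℝⁿ-valued random vector with E[εᵢ] = 0, E[εᵢεⱼ] = 0 for i ≠ j, and E[εᵢ²] = σ² for all i. Set Y = m + ε and m̂ₖ = (I − (I−S)^k) Y. Then lim_{k→∞} E[‖m̂ₖ − m‖²] = n σ². -/

import Mathlib

open Matrix MeasureTheory Filter

/-- Coordinates of a vector in Euclidean space are bounded by its norm. -/
lemma aux_coord_le_norm {n : ℕ} (y : EuclideanSpace ℝ (Fin n)) (i : Fin n) :
    |y i| ≤ ‖y‖ := by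
  rw [EuclideanSpace.norm_eq]
  have h1 : |y i| = Real.sqrt ((y i) ^ 2) := by
    rw [Real.sqrt_sq_eq_abs]
  rw [h1]
  apply Real.sqrt_le_sqrt
  have := Finset.single_le_sum (f := fun j => ‖y j‖ ^ 2)
    (fun j _ => sq_nonneg _) (Finset.mem_univ i)
  simpa [Real.norm_eq_abs, sq_abs] using this

/-- The second moment of an affine image of an uncorrelated error vector. -/
lemma aux_integral {Ω : Type*} [MeasureSpace Ω] [IsProbabilityMeasure (volume : Measure Ω)]
    {n : ℕ} (ε : Ω → Fin n → ℝ) (σ : ℝ)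
    (hint : ∀ i, Integrable (fun ω => ε ω i))
    (hint2 : ∀ i j, Integrable (fun ω => ε ω i * ε ω j))
    (hmean : ∀ i, (∫ ω, ε ω i) = 0)
    (huncorr : ∀ i j, i ≠ j → (∫ ω, ε ω i * ε ω j) = 0)
    (hvar : ∀ i, (∫ ω, ε ω i * ε ω i) = σ ^ 2)
    (v : Fin n → ℝ) (A : Matrix (Fin n) (Fin n) ℝ) :
    (∫ ω, ∑ i, (v i + ∑ j, A i j * ε ω j) ^ 2)
      = (∑ i, v i ^ 2) + σ ^ 2 * ∑ i, ∑ j, A i j ^ 2 := by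
  have hs : ∀ i, Integrable (fun ω => ∑ j, A i j * ε ω j) := fun i =>
    integrable_finset_sum _ fun j _ => (hint j).const_mul _
  have hssrw : ∀ i, (fun ω => (∑ j, A i j * ε ω j) * (∑ j, A i j * ε ω j))
      = fun ω => ∑ j, ∑ l, (A i j * A i l) * (ε ω j * ε ω l) := by
    intro i
    funext ω
    rw [Finset.sum_mul_sum]
    exact Finset.sum_congr rfl fun j _ => Finset.sum_congr rfl fun l _ => by ring
  have hss : ∀ i, Integrable
      (fun ω => (∑ j, A i j * ε ω j) * (∑ j, A i j * ε ω j)) := by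
    intro i
    rw [hssrw i]
    exact integrable_finset_sum _ fun j _ =>
      integrable_finset_sum _ fun l _ => (hint2 j l).const_mul _
  have hterm : ∀ i, Integrable (fun ω => (v i + ∑ j, A i j * ε ω j) ^ 2) := by
    intro i
    have h : (fun ω => (v i + ∑ j, A i j * ε ω j) ^ 2)
        = fun ω => (v i ^ 2 + (2 * v i) * (∑ j, A i j * ε ω j))
            + (∑ j, A i j * ε ω j) * (∑ j, A i j * ε ω j) := by
      funext ω; ring
    rw [h]
    exact ((integrable_const _).add ((hs i).const_mul _)).add (hss i)
  rw [integral_finset_sum _ (fun i _ => hterm i)]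
  have hcalc : ∀ i, (∫ ω, (v i + ∑ j, A i j * ε ω j) ^ 2)
      = v i ^ 2 + σ ^ 2 * ∑ j, A i j ^ 2 := by
    intro i
    have h1 : (∫ ω, ∑ j, A i j * ε ω j) = 0 := by
      rw [integral_finset_sum _ (fun j _ => (hint j).const_mul _)]
      simp [integral_const_mul, hmean]
    have h2 : (∫ ω, (∑ j, A i j * ε ω j) * (∑ j, A i j * ε ω j))
        = σ ^ 2 * ∑ j, A i j ^ 2 := by
      rw [show (fun ω => (∑ j, A i j * ε ω j) * (∑ j, A i j * ε ω j)) = _ from hssrw i]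
      rw [integral_finset_sum _ (fun j _ =>
        integrable_finset_sum _ fun l _ => (hint2 j l).const_mul _)]
      have hin : ∀ j, (∫ ω, ∑ l, (A i j * A i l) * (ε ω j * ε ω l))
          = (A i j * A i j) * σ ^ 2 := by
        intro j
        rw [integral_finset_sum _ (fun l _ => (hint2 j l).const_mul _)]
        rw [Finset.sum_eq_single j]
        · rw [integral_const_mul, hvar j]
        · intro l _ hl
          rw [integral_const_mul, huncorr j l (fun h => hl h.symm), mul_zero]
        · intro h; exact absurd (Finset.mem_univ j) h
      rw [Finset.sum_congr rfl fun j _ => hin j, Finset.mul_sum]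
      exact Finset.sum_congr rfl fun j _ => by ring
    have expand : (∫ ω, (v i + ∑ j, A i j * ε ω j) ^ 2)
        = ∫ ω, ((v i ^ 2 + (2 * v i) * (∑ j, A i j * ε ω j))
            + (∑ j, A i j * ε ω j) * (∑ j, A i j * ε ω j)) := by
      congr 1; funext ω; ring
    have ib : Integrable (fun ω => (2 * v i) * (∑ j, A i j * ε ω j)) :=
      (hs i).const_mul _
    have ia : Integrable
        (fun ω => v i ^ 2 + (2 * v i) * (∑ j, A i j * ε ω j)) :=
      (integrable_const _).add ib
    rw [expand, integral_add ia (hss i), integral_add (integrable_const _) ib,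
      integral_const_mul, h1, h2, integral_const]
    simp
  rw [Finset.sum_congr rfl fun i _ => hcalc i, Finset.sum_add_distrib, Finset.mul_sum]

set_option synthInstance.maxHeartbeats 1000000 in
set_option maxHeartbeats 1000000 in
/-- **Limit of the mean squared error of the boosted smoother.**
If `‖I−S‖_op < 1`, `Y = m + ε` with uncorrelated mean-zero errors of variance `σ²`,
and `m̂ₖ = (I − (I−S)^k) Y`, then `E[‖m̂ₖ − m‖²] → n σ²` as `k → ∞`. -/
theorem mse_tendsto_n_sigma_sq
    {Ω : Type*} [MeasureSpace Ω] [IsProbabilityMeasure (volume : Measure Ω)]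
    {n : ℕ} (S : Matrix (Fin n) (Fin n) ℝ)
    (hcontr : ‖Matrix.toEuclideanCLM (𝕜 := ℝ) (n := Fin n)
        ((1 : Matrix (Fin n) (Fin n) ℝ) - S)‖ < 1)
    (m : Fin n → ℝ) (σ : ℝ) (hσ : 0 < σ)
    (ε : Ω → Fin n → ℝ)
    (hint : ∀ i, Integrable (fun ω => ε ω i))
    (hint2 : ∀ i j, Integrable (fun ω => ε ω i * ε ω j))
    (hmean : ∀ i, (∫ ω, ε ω i) = 0)
    (huncorr : ∀ i j, i ≠ j → (∫ ω, ε ω i * ε ω j) = 0)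
    (hvar : ∀ i, (∫ ω, ε ω i * ε ω i) = σ ^ 2)
    (Y : Ω → Fin n → ℝ) (hY : ∀ ω, Y ω = m + ε ω)
    (mhat : ℕ → Ω → Fin n → ℝ)
    (hmhat : ∀ k ω, mhat k ω =
      ((1 : Matrix (Fin n) (Fin n) ℝ) - ((1 : Matrix (Fin n) (Fin n) ℝ) - S) ^ k).mulVec (Y ω)) :
    Tendsto (fun k => ∫ ω, ‖(WithLp.equiv 2 (Fin n → ℝ)).symm (mhat k ω - m)‖ ^ 2)
      atTop (nhds (n * σ ^ 2)) := by
  classical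
  set B : Matrix (Fin n) (Fin n) ℝ := 1 - S with hBdef
  -- a formula for the norm squared
  have hnorm : ∀ z : Fin n → ℝ,
      ‖(WithLp.equiv 2 (Fin n → ℝ)).symm z‖ ^ 2 = ∑ i, z i ^ 2 := by
    intro z
    rw [EuclideanSpace.norm_eq,
      Real.sq_sqrt (Finset.sum_nonneg fun i _ => sq_nonneg _)]
    simp [Real.norm_eq_abs, sq_abs]
  -- exact value of the integral for each k
  have key : ∀ k, (∫ ω, ‖(WithLp.equiv 2 (Fin n → ℝ)).symm (mhat k ω - m)‖ ^ 2)
      = (∑ i, (-((B ^ k).mulVec m i)) ^ 2)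
        + σ ^ 2 * ∑ i, ∑ j, ((1 - B ^ k) i j) ^ 2 := by
    intro k
    have hfun : (fun ω => ‖(WithLp.equiv 2 (Fin n → ℝ)).symm (mhat k ω - m)‖ ^ 2)
        = fun ω => ∑ i, ((-((B ^ k).mulVec m i)) + ∑ j, (1 - B ^ k) i j * ε ω j) ^ 2 := by
      funext ω
      rw [hnorm]
      refine Finset.sum_congr rfl fun i _ => ?_
      have hvec : mhat k ω - m
          = (-((B ^ k).mulVec m)) + (1 - B ^ k).mulVec (ε ω) := by
        rw [hmhat, hY, Matrix.mulVec_add, Matrix.sub_mulVec, Matrix.one_mulVec]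
        funext i
        simp only [Pi.add_apply, Pi.sub_apply, Pi.neg_apply]
        ring
      rw [hvec]
      simp [Matrix.mulVec, dotProduct]
    rw [hfun]
    exact aux_integral ε σ hint hint2 hmean huncorr hvar _ _
  have hkeyfun : (fun k => ∫ ω, ‖(WithLp.equiv 2 (Fin n → ℝ)).symm (mhat k ω - m)‖ ^ 2)
      = fun k => (∑ i, (-((B ^ k).mulVec m i)) ^ 2)
        + σ ^ 2 * ∑ i, ∑ j, ((1 - B ^ k) i j) ^ 2 := funext key
  rw [hkeyfun]
  -- entries of B ^ k tend to zero
  have hgeo : Tendsto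
      (fun k => ‖Matrix.toEuclideanCLM (𝕜 := ℝ) (n := Fin n) B‖ ^ k)
      atTop (nhds 0) :=
    tendsto_pow_atTop_nhds_zero_of_lt_one (norm_nonneg _) hcontr
  have hent : ∀ i j, Tendsto (fun k => (B ^ k) i j) atTop (nhds 0) := by
    intro i j
    have hbound : ∀ k, 1 ≤ k →
        |(B ^ k) i j| ≤ ‖Matrix.toEuclideanCLM (𝕜 := ℝ) (n := Fin n) B‖ ^ k := by
      intro k hk
      have h1 : (B ^ k) i j
          = (Matrix.toEuclideanCLM (𝕜 := ℝ) (n := Fin n) (B ^ k)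
              ((WithLp.equiv 2 (Fin n → ℝ)).symm (Pi.single j 1))) i := by
        rw [WithLp.equiv_symm_apply, Matrix.toEuclideanCLM_toLp]
        simp [Matrix.mulVec_single]
      rw [h1]
      calc |(Matrix.toEuclideanCLM (𝕜 := ℝ) (n := Fin n) (B ^ k)
              ((WithLp.equiv 2 (Fin n → ℝ)).symm (Pi.single j 1))) i|
          ≤ ‖Matrix.toEuclideanCLM (𝕜 := ℝ) (n := Fin n) (B ^ k)
              ((WithLp.equiv 2 (Fin n → ℝ)).symm (Pi.single j 1))‖ :=
            aux_coord_le_norm _ i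
        _ ≤ ‖Matrix.toEuclideanCLM (𝕜 := ℝ) (n := Fin n) (B ^ k)‖
              * ‖(WithLp.equiv 2 (Fin n → ℝ)).symm (Pi.single j (1 : ℝ))‖ :=
            ContinuousLinearMap.le_opNorm _ _
        _ = ‖(Matrix.toEuclideanCLM (𝕜 := ℝ) (n := Fin n) B) ^ k‖ := by
            rw [map_pow]
            simp [WithLp.equiv_symm_apply, PiLp.norm_toLp_single]
        _ ≤ ‖Matrix.toEuclideanCLM (𝕜 := ℝ) (n := Fin n) B‖ ^ k :=
            norm_pow_le' _ (by omega)
    have hub : ∀ᶠ k in atTop, (B ^ k) i j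
        ≤ ‖Matrix.toEuclideanCLM (𝕜 := ℝ) (n := Fin n) B‖ ^ k :=
      eventually_atTop.2 ⟨1, fun k hk => (le_abs_self _).trans (hbound k hk)⟩
    have hlb : ∀ᶠ k in atTop,
        -(‖Matrix.toEuclideanCLM (𝕜 := ℝ) (n := Fin n) B‖ ^ k) ≤ (B ^ k) i j :=
      eventually_atTop.2 ⟨1, fun k hk => by
        have h := hbound k hk
        have h' := neg_abs_le ((B ^ k) i j)
        linarith⟩
    have hgneg : Tendsto
        (fun k => -(‖Matrix.toEuclideanCLM (𝕜 := ℝ) (n := Fin n) B‖ ^ k))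
        atTop (nhds 0) := by
      simpa using hgeo.neg
    exact tendsto_of_tendsto_of_tendsto_of_le_of_le' hgneg hgeo hlb hub
  -- first term tends to 0
  have h1 : Tendsto (fun k : ℕ => ∑ i, (-((B ^ k).mulVec m i)) ^ 2) atTop (nhds 0) := by
    have hsum : ∀ i : Fin n,
        Tendsto (fun k : ℕ => (-((B ^ k).mulVec m i)) ^ 2) atTop (nhds 0) := by
      intro i
      have hmv : Tendsto (fun k : ℕ => (B ^ k).mulVec m i) atTop (nhds 0) := by
        have : ∀ k, (B ^ k).mulVec m i = ∑ j, (B ^ k) i j * m j := by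
          intro k; simp [Matrix.mulVec, dotProduct]
        simp only [this]
        have := tendsto_finset_sum Finset.univ
          (fun j _ => (hent i j).mul_const (m j))
        simpa using this
      have := (hmv.neg).pow 2
      simpa using this
    have := tendsto_finset_sum Finset.univ (fun i _ => hsum i)
    simpa using this
  -- second term tends to σ² * n
  have h2 : Tendsto (fun k : ℕ => σ ^ 2 * ∑ i, ∑ j, ((1 - B ^ k : Matrix (Fin n) (Fin n) ℝ) i j) ^ 2) atTop
      (nhds (σ ^ 2 * (n : ℝ))) := by
    have hsum : Tendsto (fun k : ℕ => ∑ i, ∑ j, ((1 - B ^ k : Matrix (Fin n) (Fin n) ℝ) i j) ^ 2) atTop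
        (nhds (∑ i : Fin n, ∑ j,
          (((1 : Matrix (Fin n) (Fin n) ℝ)) i j - 0) ^ 2)) := by
      refine tendsto_finset_sum _ fun i _ => tendsto_finset_sum _ fun j _ => ?_
      have : ∀ k : ℕ, ((1 - B ^ k : Matrix (Fin n) (Fin n) ℝ) i j)
          = ((1 : Matrix (Fin n) (Fin n) ℝ)) i j - (B ^ k) i j := by
        intro k; simp [Matrix.sub_apply]
      simp only [this]
      exact (tendsto_const_nhds.sub (hent i j)).pow 2
    have hval : (∑ i : Fin n, ∑ j,
        (((1 : Matrix (Fin n) (Fin n) ℝ)) i j - 0) ^ 2) = (n : ℝ) := by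
      simp [Matrix.one_apply, apply_ite (· ^ (2 : ℕ))]
    rw [hval] at hsum
    exact tendsto_const_nhds.mul hsum
  have := h1.add h2
  have heq : (0 : ℝ) + σ ^ 2 * (n : ℝ) = (n : ℝ) * σ ^ 2 := by ring
  rw [heq] at this
  exact this
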